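/- Let ε > 0. Every function v : Ω → ℝ with v(x) = 0 for all x ∈ S satisfies −Δ♯_ε v(x) = (2d/ε²)·v(x) for every x ∈ Ω (since v ∘ cp ≡ 0, so Δ(v ∘ cp) ≡ 0 and the penalty term equals −(2d/ε²) v). Consequently, if Ω \ S is infinite, the eigenspace of the regularized embedded eigenvalue problem at the eigenvalue 2d/ε² is infinite-dimensional: the null-space ill-posedness is shifted from λ = 0 to λ = 2d/ε². -/

import Mathlib

/-- The standard Euclidean Laplacian on `ℝ^d`: the sum of the second partial
derivatives. -/
noncomputable def lap {d : ℕ} (f : EuclideanSpace ℝ (Fin d) → ℝ)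
    (x : EuclideanSpace ℝ (Fin d)) : ℝ :=
  ∑ i : Fin d, fderiv ℝ (fun y => fderiv ℝ f y (EuclideanSpace.single i 1)) x
    (EuclideanSpace.single i 1)

/-- The regularized operator `Δ♯_ε v(x) = Δ(v ∘ cp)(x) − (2d/ε²)·(v(x) − v(cp(x)))`. -/
noncomputable def lapSharp {d : ℕ}
    (cp : EuclideanSpace ℝ (Fin d) → EuclideanSpace ℝ (Fin d)) (ε : ℝ)
    (v : EuclideanSpace ℝ (Fin d) → ℝ) (x : EuclideanSpace ℝ (Fin d)) : ℝ :=
  lap (fun y => v (cp y)) x - (2 * (d : ℝ) / ε ^ 2) * (v x - v (cp x))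

open Filter Topology

/-- If `f` vanishes near `x`, then `lap f x = 0`. -/
lemma lap_eventually_zero {d : ℕ} {f : EuclideanSpace ℝ (Fin d) → ℝ}
    {x : EuclideanSpace ℝ (Fin d)} (h : ∀ᶠ y in 𝓝 x, f y = 0) : lap f x = 0 := by
  obtain ⟨U, hUsub, hUopen, hxU⟩ := mem_nhds_iff.mp h
  have hder : ∀ y ∈ U, fderiv ℝ f y = 0 := by
    intro y hy
    have hev : f =ᶠ[𝓝 y] fun _ => (0 : ℝ) :=
      eventually_of_mem (hUopen.mem_nhds hy) fun z hz => hUsub hz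
    rw [hev.fderiv_eq, fderiv_fun_const]
    rfl
  have : ∀ i : Fin d,
      fderiv ℝ (fun y => fderiv ℝ f y (EuclideanSpace.single i 1)) x
        (EuclideanSpace.single i 1) = 0 := by
    intro i
    have hev : (fun y => fderiv ℝ f y (EuclideanSpace.single i 1))
        =ᶠ[𝓝 x] fun _ => (0 : ℝ) := by
      refine eventually_of_mem (hUopen.mem_nhds hxU) fun z hz => ?_
      simp [hder z hz]
    rw [hev.fderiv_eq, fderiv_fun_const]
    rfl
  simp [lap, this]

/-- `lap` is additive on twice continuously differentiable functions on an open set. -/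
lemma lap_add {d : ℕ} {Ω : Set (EuclideanSpace ℝ (Fin d))} (hΩ : IsOpen Ω)
    {f g : EuclideanSpace ℝ (Fin d) → ℝ}
    (hf : ContDiffOn ℝ 2 f Ω) (hg : ContDiffOn ℝ 2 g Ω)
    {x : EuclideanSpace ℝ (Fin d)} (hx : x ∈ Ω) :
    lap (fun y => f y + g y) x = lap f x + lap g x := by
  have hf1 : ContDiffOn ℝ 1 (fderiv ℝ f) Ω :=
    hf.fderiv_of_isOpen hΩ (by norm_num)
  have hg1 : ContDiffOn ℝ 1 (fderiv ℝ g) Ω :=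
    hg.fderiv_of_isOpen hΩ (by norm_num)
  have key : ∀ i : Fin d,
      fderiv ℝ (fun y => fderiv ℝ (fun z => f z + g z) y (EuclideanSpace.single i 1)) x
        (EuclideanSpace.single i 1)
      = fderiv ℝ (fun y => fderiv ℝ f y (EuclideanSpace.single i 1)) x
          (EuclideanSpace.single i 1)
        + fderiv ℝ (fun y => fderiv ℝ g y (EuclideanSpace.single i 1)) x
          (EuclideanSpace.single i 1) := by
    intro i
    have dfA : DifferentiableAt ℝ (fun y => fderiv ℝ f y (EuclideanSpace.single i 1)) x :=
      (((hf1.differentiableOn one_ne_zero).differentiableAt (hΩ.mem_nhds hx)).clm_apply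
        (differentiableAt_const _))
    have dgA : DifferentiableAt ℝ (fun y => fderiv ℝ g y (EuclideanSpace.single i 1)) x :=
      (((hg1.differentiableOn one_ne_zero).differentiableAt (hΩ.mem_nhds hx)).clm_apply
        (differentiableAt_const _))
    have hev : (fun y => fderiv ℝ (fun z => f z + g z) y (EuclideanSpace.single i 1))
        =ᶠ[𝓝 x] fun y => fderiv ℝ f y (EuclideanSpace.single i 1)
          + fderiv ℝ g y (EuclideanSpace.single i 1) := by
      refine eventually_of_mem (hΩ.mem_nhds hx) fun y hy => ?_
      have hfd : DifferentiableAt ℝ f y :=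
        (hf.differentiableOn (by norm_num)).differentiableAt (hΩ.mem_nhds hy)
      have hgd : DifferentiableAt ℝ g y :=
        (hg.differentiableOn (by norm_num)).differentiableAt (hΩ.mem_nhds hy)
      have h' : fderiv ℝ (fun z => f z + g z) y = fderiv ℝ f y + fderiv ℝ g y :=
        fderiv_add hfd hgd
      simp [h']
    rw [hev.fderiv_eq, fderiv_fun_add dfA dgA]
    rfl
  simp only [lap, key, Finset.sum_add_distrib]

/-- `lap` commutes with scalar multiplication on C² functions on an open set. -/
lemma lap_smul {d : ℕ} {Ω : Set (EuclideanSpace ℝ (Fin d))} (hΩ : IsOpen Ω)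
    {f : EuclideanSpace ℝ (Fin d) → ℝ} (c : ℝ)
    (hf : ContDiffOn ℝ 2 f Ω)
    {x : EuclideanSpace ℝ (Fin d)} (hx : x ∈ Ω) :
    lap (fun y => c * f y) x = c * lap f x := by
  have hf1 : ContDiffOn ℝ 1 (fderiv ℝ f) Ω :=
    hf.fderiv_of_isOpen hΩ (by norm_num)
  have key : ∀ i : Fin d,
      fderiv ℝ (fun y => fderiv ℝ (fun z => c * f z) y (EuclideanSpace.single i 1)) x
        (EuclideanSpace.single i 1)
      = c * fderiv ℝ (fun y => fderiv ℝ f y (EuclideanSpace.single i 1)) x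
          (EuclideanSpace.single i 1) := by
    intro i
    have dfA : DifferentiableAt ℝ (fun y => fderiv ℝ f y (EuclideanSpace.single i 1)) x :=
      (((hf1.differentiableOn one_ne_zero).differentiableAt (hΩ.mem_nhds hx)).clm_apply
        (differentiableAt_const _))
    have hev : (fun y => fderiv ℝ (fun z => c * f z) y (EuclideanSpace.single i 1))
        =ᶠ[𝓝 x] fun y => c * fderiv ℝ f y (EuclideanSpace.single i 1) := by
      refine eventually_of_mem (hΩ.mem_nhds hx) fun y hy => ?_
      have hfd : DifferentiableAt ℝ f y :=
        (hf.differentiableOn (by norm_num)).differentiableAt (hΩ.mem_nhds hy)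
      have h' : fderiv ℝ (fun z => c * f z) y = c • fderiv ℝ f y := by
        rw [show (fun z => c * f z) = fun z => c • f z from rfl]
        exact fderiv_const_smul hfd c
      simp [h']
    rw [hev.fderiv_eq]
    have : (fun y => c * fderiv ℝ f y (EuclideanSpace.single i 1))
        = fun y => c • (fderiv ℝ f y (EuclideanSpace.single i 1)) := rfl
    rw [this, fderiv_fun_const_smul dfA c]
    simp
  simp only [lap, key, Finset.mul_sum]

theorem stmt8 (d : ℕ) (hd : 1 ≤ d)
    (S Ω : Set (EuclideanSpace ℝ (Fin d))) (hSne : S.Nonempty) (hΩ : IsOpen Ω)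
    (hSΩ : S ⊆ Ω)
    (cp : EuclideanSpace ℝ (Fin d) → EuclideanSpace ℝ (Fin d))
    (hcpS : ∀ x ∈ Ω, cp x ∈ S)
    (hcpdist : ∀ x ∈ Ω, ‖x - cp x‖ = Metric.infDist x S)
    (ε : ℝ) (hε : 0 < ε) :
    (∀ v : EuclideanSpace ℝ (Fin d) → ℝ, (∀ x ∈ S, v x = 0) →
      ∀ x ∈ Ω, -(lapSharp cp ε v x) = (2 * (d : ℝ) / ε ^ 2) * v x) ∧
    ((Ω \ S).Infinite →
      ∃ N : Submodule ℝ (EuclideanSpace ℝ (Fin d) → ℝ),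
        (∀ v, v ∈ N ↔ (ContDiffOn ℝ 2 (fun x => v (cp x)) Ω ∧
          ∀ x ∈ Ω, -(lapSharp cp ε v x) = (2 * (d : ℝ) / ε ^ 2) * v x)) ∧
        ¬ FiniteDimensional ℝ N) := by
  set c : ℝ := 2 * (d : ℝ) / ε ^ 2 with hc
  -- The equation is equivalent to: lap (v ∘ cp) x = -c * v (cp x)
  have heqn : ∀ (v : EuclideanSpace ℝ (Fin d) → ℝ) (x : EuclideanSpace ℝ (Fin d)),
      (-(lapSharp cp ε v x) = c * v x) ↔
      (lap (fun y => v (cp y)) x = -c * v (cp x)) := by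
    intro v x
    unfold lapSharp
    constructor <;> intro h <;> linarith
  -- Part 1
  have part1 : ∀ v : EuclideanSpace ℝ (Fin d) → ℝ, (∀ x ∈ S, v x = 0) →
      ∀ x ∈ Ω, -(lapSharp cp ε v x) = c * v x := by
    intro v hv x hx
    rw [heqn]
    have hz : lap (fun y => v (cp y)) x = 0 := by
      apply lap_eventually_zero
      exact eventually_of_mem (hΩ.mem_nhds hx) fun y hy => hv _ (hcpS y hy)
    rw [hz, hv _ (hcpS x hx), mul_zero]
  refine ⟨part1, fun hinf => ?_⟩
  -- The submodule
  let N : Submodule ℝ (EuclideanSpace ℝ (Fin d) → ℝ) := {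
    carrier := {v | ContDiffOn ℝ 2 (fun x => v (cp x)) Ω ∧
      ∀ x ∈ Ω, -(lapSharp cp ε v x) = c * v x}
    zero_mem' := by
      constructor
      · exact contDiffOn_const
      · intro x hx
        rw [heqn]
        simp only [Pi.zero_apply, mul_zero]
        exact lap_eventually_zero (Eventually.of_forall fun _ => rfl)
    add_mem' := by
      rintro v w ⟨hv1, hv2⟩ ⟨hw1, hw2⟩
      constructor
      · exact hv1.add hw1
      · intro x hx
        rw [heqn]
        have := lap_add hΩ hv1 hw1 hx
        have hv2' := (heqn v x).mp (hv2 x hx)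
        have hw2' := (heqn w x).mp (hw2 x hx)
        simp only [Pi.add_apply]
        rw [show (fun y => v (cp y) + w (cp y))
            = fun y => (fun z => v (cp z)) y + (fun z => w (cp z)) y from rfl] at this
        rw [this, hv2', hw2']
        ring
    smul_mem' := by
      rintro a v ⟨hv1, hv2⟩
      constructor
      · exact hv1.const_smul a
      · intro x hx
        rw [heqn]
        have := lap_smul hΩ a hv1 hx
        have hv2' := (heqn v x).mp (hv2 x hx)
        simp only [Pi.smul_apply, smul_eq_mul]
        rw [show (fun y => a * v (cp y)) = fun y => a * (fun z => v (cp z)) y from rfl] at this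
        rw [this, hv2']
        ring }
  refine ⟨N, fun v => Iff.rfl, ?_⟩
  -- Not finite dimensional
  intro hfin
  -- family of indicator functions at points of Ω \ S
  classical
  let vfam : ↥(Ω \ S) → (EuclideanSpace ℝ (Fin d) → ℝ) :=
    fun p => fun x => if x = (p : EuclideanSpace ℝ (Fin d)) then 1 else 0
  have hvS : ∀ p : ↥(Ω \ S), ∀ x ∈ S, vfam p x = 0 := by
    intro p x hx
    have : x ≠ (p : EuclideanSpace ℝ (Fin d)) := fun h => p.2.2 (h ▸ hx)
    simp [vfam, this]
  have hmem : ∀ p : ↥(Ω \ S), vfam p ∈ N := by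
    intro p
    constructor
    · apply ContDiffOn.congr (contDiffOn_const (c := (0 : ℝ)))
      intro y hy
      exact hvS p _ (hcpS y hy)
    · intro x hx
      exact part1 (vfam p) (hvS p) x hx
  have hli : LinearIndependent ℝ vfam := by
    rw [linearIndependent_iff']
    intro s g hsum p hp
    have h0 := congrFun hsum (p : EuclideanSpace ℝ (Fin d))
    simp only [Finset.sum_apply, Pi.smul_apply, smul_eq_mul, Pi.zero_apply] at h0
    rw [Finset.sum_eq_single p] at h0
    · simpa [vfam] using h0
    · intro q hq hqp
      have hne : (p : EuclideanSpace ℝ (Fin d)) ≠ (q : EuclideanSpace ℝ (Fin d)) :=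
        fun h => hqp (Subtype.ext h.symm)
      simp [vfam, hne]
    · intro h; exact absurd hp h
  have hliN : LinearIndependent ℝ (fun p : ↥(Ω \ S) => (⟨vfam p, hmem p⟩ : N)) := by
    apply LinearIndependent.of_comp N.subtype
    exact hli
  haveI : Infinite ↥(Ω \ S) := hinf.to_subtype
  haveI : FiniteDimensional ℝ N := hfin
  exact Module.Finite.not_linearIndependent_of_infinite _ hliN
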